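/- arXiv:1703.06547 — 2 statements merged into one kernel-verified Lean document; each statement's English description precedes it below -/
import Mathlib

section
/- A single exaggerating agent cannot increase total social welfare in the VCG relay-selection mechanism: suppose all agents j ≠ i bid truthfully (b_j = v_j) and agent i bids b_i ≥ v_i. Then for every welfare-maximizing K-subset S' for the reported profile b, there exists a welfare-maximizing K-subset S for the truthful profile v such that the total utility under the reported profile, Σ_{j∈S'} v_j − K·max_{j∉S'} b_j, is at most the total utility under truthful bidding, Σ_{j∈S} v_j − K·max_{j∉S} v_j. -/
open Finset

/-- The highest losing bid: the maximum of the bids of agents outside the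
selected set `S` (as a supremum of the image set). -/
noncomputable def losingBid {N : ℕ} (b : Fin N → ℝ) (S : Finset (Fin N)) : ℝ :=
  sSup (b '' {j | j ∉ S})

/-- `S` is a welfare-maximizing `K`-subset for the reported bid profile `b`. -/
def IsWelfareMax {N : ℕ} (b : Fin N → ℝ) (K : ℕ) (S : Finset (Fin N)) : Prop :=
  S.card = K ∧ ∀ T : Finset (Fin N), T.card = K → ∑ j ∈ T, b j ≤ ∑ j ∈ S, b j

lemma compl_nonempty_of_card_lt {N : ℕ} (S : Finset (Fin N)) (h : S.card < N) :
    ∃ j, j ∉ S := by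
  by_contra hc
  push_neg at hc
  have : S = Finset.univ := Finset.eq_univ_of_forall hc
  simp [this] at h

lemma le_losingBid {N : ℕ} (v : Fin N → ℝ) (S : Finset (Fin N)) {j : Fin N}
    (hj : j ∉ S) : v j ≤ losingBid v S := by
  apply le_csSup (Set.Finite.bddAbove (Set.toFinite _))
  exact ⟨j, hj, rfl⟩

lemma losingBid_mem {N : ℕ} (v : Fin N → ℝ) (S : Finset (Fin N)) (h : S.card < N) :
    ∃ j, j ∉ S ∧ v j = losingBid v S := by
  obtain ⟨j, hj⟩ := compl_nonempty_of_card_lt S h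
  have hne : (v '' {j | j ∉ S}).Nonempty := ⟨v j, j, hj, rfl⟩
  have := hne.csSup_mem (Set.toFinite _)
  obtain ⟨j0, hj0, hj0v⟩ := this
  exact ⟨j0, hj0, hj0v⟩

/-- Exchange lemma: in a welfare-maximizing set, any member's value is at
least any non-member's value. -/
lemma exchange {N K : ℕ} {v : Fin N → ℝ} {S : Finset (Fin N)}
    (hS : IsWelfareMax v K S) {j0 j1 : Fin N} (h0 : j0 ∉ S) (h1 : j1 ∈ S) :
    v j0 ≤ v j1 := by
  obtain ⟨hcard, hmax⟩ := hS
  set T := insert j0 (S.erase j1) with hT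
  have hj0e : j0 ∉ S.erase j1 := fun h => h0 (Finset.mem_of_mem_erase h)
  have hTcard : T.card = K := by
    rw [hT, Finset.card_insert_of_notMem hj0e, Finset.card_erase_of_mem h1, hcard]
    have : 0 < K := by
      rw [← hcard]; exact Finset.card_pos.mpr ⟨j1, h1⟩
    omega
  have hsum : ∑ j ∈ T, v j = v j0 + (∑ j ∈ S, v j - v j1) := by
    rw [hT, Finset.sum_insert hj0e, Finset.sum_erase_eq_sub h1]
  have := hmax T hTcard
  rw [hsum] at this
  linarith

/-- A single exaggerating agent cannot increase the total social welfare: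
the total utility under the reported profile (with agent `i` exaggerating and
all other agents truthful) is at most the total utility under truthful bidding,
for some welfare-maximizing selection of the truthful profile.  The total
utility of a profile with selection `S` is `∑_{j∈S} v j - K · (highest losing bid)`,
since each of the `K` selected agents pays the highest losing bid. -/
theorem exaggeration_cannot_increase_total_welfare {N K : ℕ} (hK : 0 < K) (hKN : K < N)
    (i : Fin N) (v : Fin N → ℝ) (hv : ∀ j, 0 ≤ v j)
    (b : Fin N → ℝ) (hb : ∀ j, j ≠ i → b j = v j) (hbi : v i ≤ b i)
    (S' : Finset (Fin N)) (hS' : IsWelfareMax b K S') :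
    ∃ S : Finset (Fin N), IsWelfareMax v K S ∧
      (∑ j ∈ S', v j) - (K : ℝ) * losingBid b S' ≤
        (∑ j ∈ S, v j) - (K : ℝ) * losingBid v S := by
  -- choose a welfare-maximizing S for v
  have hpow : ((Finset.univ : Finset (Fin N)).powersetCard K).Nonempty := by
    rw [Finset.powersetCard_nonempty]
    simp [Finset.card_univ]
    omega
  obtain ⟨S, hSmem, hSmax⟩ :=
    Finset.exists_max_image _ (fun T => ∑ j ∈ T, v j) hpow
  rw [Finset.mem_powersetCard] at hSmem
  have hScard : S.card = K := hSmem.2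
  have hSwm : IsWelfareMax v K S := by
    refine ⟨hScard, fun T hT => ?_⟩
    exact hSmax T (Finset.mem_powersetCard.mpr ⟨Finset.subset_univ _, hT⟩)
  refine ⟨S, hSwm, ?_⟩
  have hS'card : S'.card = K := hS'.1
  -- b ≥ v pointwise
  have hbv : ∀ j, v j ≤ b j := by
    intro j
    by_cases h : j = i
    · subst h; exact hbi
    · rw [hb j h]
  -- (a) losingBid v S' ≤ losingBid b S'
  have hSltN : S'.card < N := by omega
  have hScardlt : S.card < N := by omega
  have ha : losingBid v S' ≤ losingBid b S' := by
    obtain ⟨j, hj⟩ := compl_nonempty_of_card_lt S' hSltN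
    unfold losingBid
    have hne : (v '' {j' | j' ∉ S'}).Nonempty := ⟨v j, j, hj, rfl⟩
    apply csSup_le hne
    rintro x ⟨j', hj', rfl⟩
    exact le_trans (hbv j') (le_losingBid b S' hj')
  -- (b) losingBid v S ≤ losingBid v S'
  have hbineq : losingBid v S ≤ losingBid v S' := by
    obtain ⟨j0, hj0, hj0v⟩ := losingBid_mem v S hScardlt
    by_cases hj0' : j0 ∈ S'
    · -- j0 ∈ S' \ S, so S \ S' nonempty
      have hne : ∃ j1, j1 ∈ S ∧ j1 ∉ S' := by
        by_contra hc
        push_neg at hc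
        have hsub : S ⊆ S' := fun x hx => hc x hx
        have : S = S' := Finset.eq_of_subset_of_card_le hsub (by omega)
        rw [this] at hj0
        exact hj0 hj0'
      obtain ⟨j1, h1S, h1S'⟩ := hne
      calc losingBid v S = v j0 := hj0v.symm
        _ ≤ v j1 := exchange hSwm hj0 h1S
        _ ≤ losingBid v S' := le_losingBid v S' h1S'
    · rw [← hj0v]
      exact le_losingBid v S' hj0'
  -- (c) sum over S' ≤ sum over S
  have hc : (∑ j ∈ S', v j) ≤ ∑ j ∈ S, v j := hSwm.2 S' hS'card
  have hKpos : (0 : ℝ) ≤ (K : ℝ) := Nat.cast_nonneg K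
  nlinarith [mul_le_mul_of_nonneg_left ha hKpos, mul_le_mul_of_nonneg_left hbineq hKpos]
end

section
/- An agent that wins only by exaggerating incurs a strictly negative utility: suppose all agents j ≠ i bid truthfully (b_j = v_j), and suppose the true value v_i is strictly less than the K-th largest value among {v_j : j ≠ i}. If agent i submits a bid b_i such that i belongs to some welfare-maximizing K-subset S for the reported profile, then agent i's utility v_i − max_{j∉S} b_j is strictly negative. -/
open Finset

/-- An agent that wins only by exaggerating incurs a strictly negative utility:
if all other agents bid truthfully and `v i` is strictly below the `K`-th
largest value among the other agents (i.e. at least `K` other agents have a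
strictly larger true value), then whenever agent `i` is selected by bidding
`bi`, its utility `v i - max_{j∉S} b j` is strictly negative. -/
theorem winning_by_exaggeration_negative_utility {N K : ℕ} (hK : 0 < K) (hKN : K < N)
    (i : Fin N) (v : Fin N → ℝ) (hv : ∀ j, 0 ≤ v j)
    (hKth : K ≤ (Finset.univ.filter (fun j : Fin N => j ≠ i ∧ v i < v j)).card)
    (bi : ℝ) (hbi : 0 ≤ bi)
    (S : Finset (Fin N)) (hS : IsWelfareMax (Function.update v i bi) K S)
    (hiS : i ∈ S) :
    v i - losingBid (Function.update v i bi) S < 0 := by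
  classical
  set A := Finset.univ.filter (fun j : Fin N => j ≠ i ∧ v i < v j) with hA
  have hnot : ¬ A ⊆ S := by
    intro hsub
    have hsub' : A ⊆ S.erase i := by
      intro j hjA
      have hj := (Finset.mem_filter.mp hjA).2
      exact Finset.mem_erase.mpr ⟨hj.1, hsub hjA⟩
    have := Finset.card_le_card hsub'
    rw [Finset.card_erase_of_mem hiS, hS.1] at this
    omega
  obtain ⟨j, hjA, hjS⟩ := Finset.not_subset.mp hnot
  obtain ⟨hji, hvij⟩ := (Finset.mem_filter.mp hjA).2
  have hmem : v j ∈ (Function.update v i bi) '' {k | k ∉ S} := by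
    exact ⟨j, hjS, by simp [Function.update_of_ne hji]⟩
  have hbdd : BddAbove ((Function.update v i bi) '' {k | k ∉ S}) :=
    (Set.toFinite _).bddAbove
  have hle : v j ≤ losingBid (Function.update v i bi) S := le_csSup hbdd hmem
  have : v i < losingBid (Function.update v i bi) S := lt_of_lt_of_le hvij hle
  linarith
end
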